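/- For every j ≥ 3 there exists a chordal graph on 2j−3 vertices with no 1-dense 4-set and no 1-sparse j-set (a chain of j−2 triangles sharing vertices consecutively, with a pendant vertex attached at each end). Consequently R_1^{CH}(4,j) ≥ 2j−2. -/

import Mathlib

/-- A set `S` of vertices is `k`-sparse if every vertex of `S` has at most `k`
neighbors in `S`. -/
def kSparse {V : Type*} (G : SimpleGraph V) (k : ℕ) (S : Set V) : Prop :=
  ∀ v ∈ S, {u | u ∈ S ∧ G.Adj v u}.ncard ≤ k

/-- A set `S` of vertices is `k`-dense if every vertex of `S` has at most `k`
non-neighbors in `S` other than itself. -/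
def kDense {V : Type*} (G : SimpleGraph V) (k : ℕ) (S : Set V) : Prop :=
  ∀ v ∈ S, {u | u ∈ S ∧ u ≠ v ∧ ¬ G.Adj v u}.ncard ≤ k

/-- A graph is chordal if every cycle of length at least 4 (given as an injective
cyclic sequence of pairwise adjacent consecutive vertices) has a chord. -/
def IsChordal {V : Type*} (G : SimpleGraph V) : Prop :=
  ∀ n : ℕ, 4 ≤ n → ∀ f : ZMod n → V, Function.Injective f →
    (∀ i, G.Adj (f i) (f (i + 1))) →
    ∃ i j : ZMod n, i ≠ j ∧ j ≠ i + 1 ∧ i ≠ j + 1 ∧ G.Adj (f i) (f j)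

/-- Adjacency pattern (on `ℕ` values) of the triangle-chain graph. -/
def adjN (a b : ℕ) : Prop :=
  a + 1 = b ∨ b + 1 = a ∨ (a + 2 = b ∧ a % 2 = 1) ∨ (b + 2 = a ∧ b % 2 = 1)

/-- The triangle-chain graph with pendant ends, on `Fin n`. -/
def cgraph (n : ℕ) : SimpleGraph (Fin n) where
  Adj a b := adjN a.val b.val
  symm := ⟨by intro a b h; simp only [adjN] at *; omega⟩
  loopless := ⟨by intro a h; simp only [adjN] at h; omega⟩

lemma zmod_cast_ne_zero {n k : ℕ} (hn : 4 ≤ n) (h0 : k ≠ 0) (hk : k < n) :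
    ((k : ℕ) : ZMod n) ≠ 0 := by
  haveI : NeZero n := ⟨by omega⟩
  rw [Ne, ZMod.natCast_eq_zero_iff]
  intro hdvd
  exact absurd (Nat.le_of_dvd (by omega) hdvd) (by omega)

lemma cgraph_chordal (n : ℕ) : IsChordal (cgraph n) := by
  intro m hm f hinj hadj
  exfalso
  haveI : NeZero m := ⟨by omega⟩
  have h1 : ((1 : ℕ) : ZMod m) ≠ 0 := zmod_cast_ne_zero hm (by omega) (by omega)
  have h2 : ((2 : ℕ) : ZMod m) ≠ 0 := zmod_cast_ne_zero hm (by omega) (by omega)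
  have h3 : ((3 : ℕ) : ZMod m) ≠ 0 := zmod_cast_ne_zero hm (by omega) (by omega)
  obtain ⟨i, -, hmax⟩ := Finset.exists_max_image (Finset.univ : Finset (ZMod m))
      (fun i => (f i).val) ⟨0, Finset.mem_univ 0⟩
  have ne_idx : ∀ a b : ZMod m, a ≠ b → (f a).val ≠ (f b).val := by
    intro a b hab hval
    exact hab (hinj (Fin.val_injective hval))
  have e1 : (i - 1 : ZMod m) ≠ i := by
    intro h; apply h1; push_cast; linear_combination -h
  have e2 : (i - 1 : ZMod m) ≠ i + 1 := by
    intro h; apply h2; push_cast; linear_combination -h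
  have e3 : (i + 1 : ZMod m) ≠ i := by
    intro h; apply h1; push_cast; linear_combination h
  have e4 : (i - 2 : ZMod m) ≠ i := by
    intro h; apply h2; push_cast; linear_combination -h
  have e5 : (i - 2 : ZMod m) ≠ i + 1 := by
    intro h; apply h3; push_cast; linear_combination -h
  have e6 : (i + 2 : ZMod m) ≠ i := by
    intro h; apply h2; push_cast; linear_combination h
  have e7 : (i + 2 : ZMod m) ≠ i - 1 := by
    intro h; apply h3; push_cast; linear_combination h
  have adj1 : adjN ((f (i - 1)).val) ((f i).val) := by
    have := hadj (i - 1)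
    rwa [sub_add_cancel] at this
  have adj2 : adjN ((f i).val) ((f (i + 1)).val) := hadj i
  have le1 : (f (i - 1)).val ≤ (f i).val := hmax _ (Finset.mem_univ _)
  have le2 : (f (i + 1)).val ≤ (f i).val := hmax _ (Finset.mem_univ _)
  have ne1 : (f (i - 1)).val ≠ (f i).val := ne_idx _ _ e1
  have ne2 : (f (i + 1)).val ≠ (f i).val := ne_idx _ _ e3
  have ne12 : (f (i - 1)).val ≠ (f (i + 1)).val := ne_idx _ _ e2
  have hc1 : (f (i - 1)).val + 1 = (f i).val ∨
      ((f (i - 1)).val + 2 = (f i).val ∧ (f (i - 1)).val % 2 = 1) := by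
    simp only [adjN] at adj1; omega
  have hc2 : (f (i + 1)).val + 1 = (f i).val ∨
      ((f (i + 1)).val + 2 = (f i).val ∧ (f (i + 1)).val % 2 = 1) := by
    simp only [adjN] at adj2; omega
  rcases hc1 with ha | ha <;> rcases hc2 with hb | hb
  · exact ne12 (by omega)
  · -- f(i-1) has value M-1 (even); look at f(i-2)
    have adj3 : adjN ((f (i - 2)).val) ((f (i - 1)).val) := by
      have := hadj (i - 2)
      rwa [show i - 2 + 1 = i - 1 by ring] at this
    have le3 : (f (i - 2)).val ≤ (f i).val := hmax _ (Finset.mem_univ _)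
    have ne3 : (f (i - 2)).val ≠ (f i).val := ne_idx _ _ e4
    have ne3b : (f (i - 2)).val ≠ (f (i + 1)).val := ne_idx _ _ e5
    simp only [adjN] at adj3
    omega
  · -- f(i+1) has value M-1 (even); look at f(i+2)
    have adj4 : adjN ((f (i + 1)).val) ((f (i + 2)).val) := by
      have := hadj (i + 1)
      rwa [show i + 1 + 1 = i + 2 by ring] at this
    have le4 : (f (i + 2)).val ≤ (f i).val := hmax _ (Finset.mem_univ _)
    have ne4 : (f (i + 2)).val ≠ (f i).val := ne_idx _ _ e6
    have ne4b : (f (i + 2)).val ≠ (f (i - 1)).val := ne_idx _ _ e7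
    simp only [adjN] at adj4
    omega
  · exact ne12 (by omega)

lemma sparseNat : ∀ n : ℕ, ∀ S : Finset ℕ, (∀ v ∈ S, v < n) →
    (∀ v ∈ S, ∀ a ∈ S, ∀ b ∈ S, adjN v a → adjN v b → a = b) →
    2 * S.card ≤ n + 1 ∨ (2 * S.card = n + 2 ∧ (n - 1) ∈ S ∧ (n - 2) ∈ S) := by
  intro n
  induction n using Nat.strong_induction_on with
  | _ n IH =>
  intro S hbd hsp
  have hsub : S ⊆ Finset.range n := fun v hv => Finset.mem_range.mpr (hbd v hv)
  have hcard : S.card ≤ n := le_trans (Finset.card_le_card hsub) (by simp)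
  rcases Nat.lt_or_ge n 3 with hn3 | hn3
  · interval_cases n
    · left; omega
    · left; omega
    · rcases Nat.lt_or_ge S.card 2 with h | h
      · left; omega
      · right
        have hS : S = Finset.range 2 := Finset.eq_of_subset_of_card_le hsub (by simpa using h)
        refine ⟨by omega, ?_, ?_⟩ <;> simp [hS]
  · by_cases h1 : (n - 1) ∈ S <;> by_cases h2 : (n - 2) ∈ S
    · -- both top vertices in S
      have hn3' : (n - 3) ∉ S := by
        intro hmem
        have := hsp (n - 2) h2 (n - 3) hmem (n - 1) h1
          (by simp only [adjN]; omega) (by simp only [adjN]; omega)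
        omega
      set S' := (S.erase (n - 1)).erase (n - 2) with hS'
      have hS'sub : S' ⊆ S := fun v hv =>
        Finset.mem_of_mem_erase (Finset.mem_of_mem_erase hv)
      have hbd' : ∀ v ∈ S', v < n - 3 := by
        intro v hv
        have hv1 : v ≠ n - 2 := Finset.ne_of_mem_erase hv
        have hv2 : v ≠ n - 1 := Finset.ne_of_mem_erase (Finset.mem_of_mem_erase hv)
        have hvS : v ∈ S := hS'sub hv
        have := hbd v hvS
        have hv3 : v ≠ n - 3 := fun h => hn3' (h ▸ hvS)
        omega
      have hsp' : ∀ v ∈ S', ∀ a ∈ S', ∀ b ∈ S', adjN v a → adjN v b → a = b :=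
        fun v hv a ha b hb => hsp v (hS'sub hv) a (hS'sub ha) b (hS'sub hb)
      have hc2 : 2 ≤ S.card := Finset.one_lt_card.mpr ⟨n - 1, h1, n - 2, h2, by omega⟩
      have card' : S'.card + 2 = S.card := by
        rw [hS', Finset.card_erase_of_mem (Finset.mem_erase.mpr ⟨by omega, h2⟩),
          Finset.card_erase_of_mem h1]
        omega
      rcases IH (n - 3) (by omega) S' hbd' hsp' with hle | ⟨heq, hm1, hm2⟩
      · rcases Nat.lt_or_ge (2 * S.card) (n + 2) with hh | hh
        · left; omega
        · right; exact ⟨by omega, h1, h2⟩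
      · exfalso
        have hm : (n - 3 - 1) ∈ S := hS'sub hm1
        rcases Nat.lt_or_ge n 4 with h4 | h4
        · have e : n - 3 - 1 = n - 3 := by omega
          exact hn3' (e ▸ hm)
        · have hodd : n % 2 = 1 := by omega
          have h44 : n - 3 - 1 = n - 4 := by omega
          rw [h44] at hm
          have := hsp (n - 2) h2 (n - 4) hm (n - 1) h1
            (by simp only [adjN]; omega) (by simp only [adjN]; omega)
          omega
    · -- n-1 ∈ S, n-2 ∉ S
      set S' := S.erase (n - 1) with hS'
      have hS'sub : S' ⊆ S := fun v hv => Finset.mem_of_mem_erase hv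
      have hbd' : ∀ v ∈ S', v < n - 2 := by
        intro v hv
        have hv1 : v ≠ n - 1 := Finset.ne_of_mem_erase hv
        have hvS : v ∈ S := hS'sub hv
        have := hbd v hvS
        have hv2 : v ≠ n - 2 := fun h => h2 (h ▸ hvS)
        omega
      have hsp' : ∀ v ∈ S', ∀ a ∈ S', ∀ b ∈ S', adjN v a → adjN v b → a = b :=
        fun v hv a ha b hb => hsp v (hS'sub hv) a (hS'sub ha) b (hS'sub hb)
      have card' : S'.card + 1 = S.card := by
        rw [hS', Finset.card_erase_of_mem h1]
        have : 1 ≤ S.card := Finset.card_pos.mpr ⟨n - 1, h1⟩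
        omega
      rcases IH (n - 2) (by omega) S' hbd' hsp' with hle | ⟨heq, hm1, hm2⟩
      · left; omega
      · exfalso
        have hm3 : (n - 2 - 1) ∈ S := hS'sub hm1
        have hm4 : (n - 2 - 2) ∈ S := hS'sub hm2
        have hev : n % 2 = 0 := by omega
        have hbig : 4 ≤ n := by
          rcases Nat.lt_or_ge n 4 with h4 | h4
          · exfalso
            -- n = 3 is odd; n even with n ≥ 3 means n ≥ 4
            omega
          · exact h4
        have e3 : n - 2 - 1 = n - 3 := by omega
        have e4 : n - 2 - 2 = n - 4 := by omega
        rw [e3] at hm3; rw [e4] at hm4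
        have := hsp (n - 3) hm3 (n - 4) hm4 (n - 1) h1
          (by simp only [adjN]; omega) (by simp only [adjN]; omega)
        omega
    · -- n-1 ∉ S, n-2 ∈ S
      set S' := S.erase (n - 2) with hS'
      have hS'sub : S' ⊆ S := fun v hv => Finset.mem_of_mem_erase hv
      have hbd' : ∀ v ∈ S', v < n - 2 := by
        intro v hv
        have hv1 : v ≠ n - 2 := Finset.ne_of_mem_erase hv
        have hvS : v ∈ S := hS'sub hv
        have := hbd v hvS
        have hv2 : v ≠ n - 1 := fun h => h1 (h ▸ hvS)
        omega
      have hsp' : ∀ v ∈ S', ∀ a ∈ S', ∀ b ∈ S', adjN v a → adjN v b → a = b :=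
        fun v hv a ha b hb => hsp v (hS'sub hv) a (hS'sub ha) b (hS'sub hb)
      have card' : S'.card + 1 = S.card := by
        rw [hS', Finset.card_erase_of_mem h2]
        have : 1 ≤ S.card := Finset.card_pos.mpr ⟨n - 2, h2⟩
        omega
      rcases IH (n - 2) (by omega) S' hbd' hsp' with hle | ⟨heq, hm1, hm2⟩
      · left; omega
      · exfalso
        have hm3 : (n - 2 - 1) ∈ S := hS'sub hm1
        have hm4 : (n - 2 - 2) ∈ S := hS'sub hm2
        have hev : n % 2 = 0 := by omega
        have hbig : 4 ≤ n := by omega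
        have e3 : n - 2 - 1 = n - 3 := by omega
        have e4 : n - 2 - 2 = n - 4 := by omega
        rw [e3] at hm3; rw [e4] at hm4
        have := hsp (n - 3) hm3 (n - 4) hm4 (n - 2) h2
          (by simp only [adjN]; omega) (by simp only [adjN]; omega)
        omega
    · -- neither
      have hbd' : ∀ v ∈ S, v < n - 2 := by
        intro v hv
        have := hbd v hv
        have hv1 : v ≠ n - 1 := fun h => h1 (h ▸ hv)
        have hv2 : v ≠ n - 2 := fun h => h2 (h ▸ hv)
        omega
      rcases IH (n - 2) (by omega) S hbd' hsp with hle | ⟨heq, -, -⟩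
      · left; omega
      · left; omega

lemma cgraph_no_dense (n : ℕ) :
    ¬ ∃ S : Set (Fin n), kDense (cgraph n) 1 S ∧ S.ncard = 4 := by
  rintro ⟨S, hD, h4⟩
  have hfin : S.Finite := Set.toFinite S
  have hne : S.Nonempty := by
    rw [← Set.ncard_pos hfin] at *; omega
  obtain ⟨m, hmS, hmax⟩ := Set.exists_max_image S id hfin hne
  -- two neighbors of m inside S
  have hB2 : 2 ≤ {u | u ∈ S ∧ u ≠ m ∧ (cgraph n).Adj m u}.ncard := by
    have hsub : S \ {m} ⊆ {u | u ∈ S ∧ u ≠ m ∧ ¬ (cgraph n).Adj m u} ∪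
        {u | u ∈ S ∧ u ≠ m ∧ (cgraph n).Adj m u} := by
      rintro z ⟨hzS, hzm⟩
      simp only [Set.mem_singleton_iff] at hzm
      by_cases hz : (cgraph n).Adj m z
      · exact Or.inr ⟨hzS, hzm, hz⟩
      · exact Or.inl ⟨hzS, hzm, hz⟩
    have h3 : (S \ {m}).ncard = 3 := by
      rw [Set.ncard_diff_singleton_of_mem hmS, h4]
    have hle := Set.ncard_le_ncard hsub (Set.toFinite _)
    have hun := Set.ncard_union_le {u | u ∈ S ∧ u ≠ m ∧ ¬ (cgraph n).Adj m u}
        {u | u ∈ S ∧ u ≠ m ∧ (cgraph n).Adj m u}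
    have hNB := hD m hmS
    omega
  obtain ⟨p, hp, q, hq, hpq⟩ := (Set.one_lt_ncard (Set.toFinite _)).mp (by omega : 1 <
      {u | u ∈ S ∧ u ≠ m ∧ (cgraph n).Adj m u}.ncard)
  obtain ⟨hpS, hpm, hpA⟩ := hp
  obtain ⟨hqS, hqm, hqA⟩ := hq
  have hpv : p.val < m.val := by
    have := hmax p hpS
    exact lt_of_le_of_ne this (fun h => hpm (Fin.val_injective h))
  have hqv : q.val < m.val := by
    have := hmax q hqS
    exact lt_of_le_of_ne this (fun h => hqm (Fin.val_injective h))
  have hpadj : adjN m.val p.val := hpA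
  have hqadj : adjN m.val q.val := hqA
  have hpqv : p.val ≠ q.val := fun h => hpq (Fin.val_injective h)
  have key : ∀ p q : Fin n, p ∈ S → q ∈ S → p ≠ q →
      p.val + 1 = m.val → q.val + 2 = m.val → q.val % 2 = 1 → False := by
    intro a b haS hbS hab ha1 hb2 hb3
    have ham : a ≠ m := fun h => by omega
    have hbm : b ≠ m := fun h => by omega
    -- find the fourth element
    have hx : ∃ x ∈ S, x ∉ ({m, a, b} : Set (Fin n)) := by
      by_contra hc
      push_neg at hc
      have hss : S ⊆ {m, a, b} := hc
      have hle := Set.ncard_le_ncard hss (Set.toFinite _)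
      have t1 : ({m, a, b} : Set (Fin n)).ncard ≤ 3 := by
        have i1 := Set.ncard_insert_le m ({a, b} : Set (Fin n))
        have i2 := Set.ncard_insert_le a ({b} : Set (Fin n))
        have i3 : ({b} : Set (Fin n)).ncard = 1 := Set.ncard_singleton b
        omega
      omega
    obtain ⟨x, hxS, hxn⟩ := hx
    simp only [Set.mem_insert_iff, Set.mem_singleton_iff, not_or] at hxn
    obtain ⟨hxm, hxa, hxb⟩ := hxn
    have hxv : x.val ≤ m.val := hmax x hxS
    have hxvm : x.val ≠ m.val := fun h => hxm (Fin.val_injective h)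
    have hxva : x.val ≠ a.val := fun h => hxa (Fin.val_injective h)
    have hxvb : x.val ≠ b.val := fun h => hxb (Fin.val_injective h)
    -- x is non-adjacent to both m and a
    have hnm : ¬ (cgraph n).Adj x m := by
      intro h
      have : adjN x.val m.val := h
      simp only [adjN] at this
      omega
    have hna : ¬ (cgraph n).Adj x a := by
      intro h
      have : adjN x.val a.val := h
      simp only [adjN] at this
      omega
    have hlt : 1 < {u | u ∈ S ∧ u ≠ x ∧ ¬ (cgraph n).Adj x u}.ncard := by
      rw [Set.one_lt_ncard (Set.toFinite _)]
      exact ⟨m, ⟨hmS, fun h => hxm h.symm, hnm⟩, a, ⟨haS, fun h => hxa h.symm, hna⟩, Ne.symm ham⟩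
    have := hD x hxS
    omega
  -- case analysis on which of p, q is the top-1 vertex
  have hp' : p.val + 1 = m.val ∨ (p.val + 2 = m.val ∧ p.val % 2 = 1) := by
    simp only [adjN] at hpadj; omega
  have hq' : q.val + 1 = m.val ∨ (q.val + 2 = m.val ∧ q.val % 2 = 1) := by
    simp only [adjN] at hqadj; omega
  rcases hp' with h | h <;> rcases hq' with h' | h'
  · omega
  · exact key p q hpS hqS hpq h h'.1 h'.2
  · exact key q p hqS hpS (Ne.symm hpq) h' h.1 h.2
  · omega

lemma cgraph_no_sparse (n j : ℕ) (hj : 3 ≤ j) (hn : n ≤ 2 * j - 3) :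
    ¬ ∃ S : Set (Fin n), kSparse (cgraph n) 1 S ∧ S.ncard = j := by
  rintro ⟨S, hS, hcard⟩
  have hfin : S.Finite := Set.toFinite S
  set T : Finset ℕ := hfin.toFinset.image Fin.val with hT
  have hTcard : T.card = j := by
    rw [hT, Finset.card_image_of_injective _ Fin.val_injective,
      ← Set.ncard_eq_toFinset_card S hfin, hcard]
  have hbd : ∀ v ∈ T, v < n := by
    intro v hv
    rw [hT, Finset.mem_image] at hv
    obtain ⟨x, -, rfl⟩ := hv
    exact x.isLt
  have hsp : ∀ v ∈ T, ∀ a ∈ T, ∀ b ∈ T, adjN v a → adjN v b → a = b := by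
    intro v hv a ha b hb hva hvb
    rw [hT, Finset.mem_image] at hv ha hb
    obtain ⟨v', hv', rfl⟩ := hv
    obtain ⟨a', ha', rfl⟩ := ha
    obtain ⟨b', hb', rfl⟩ := hb
    rw [Set.Finite.mem_toFinset] at hv' ha' hb'
    by_contra hab
    have h2 : 1 < {u | u ∈ S ∧ (cgraph n).Adj v' u}.ncard := by
      rw [Set.one_lt_ncard (Set.toFinite _)]
      exact ⟨a', ⟨ha', hva⟩, b', ⟨hb', hvb⟩, fun h => hab (congrArg Fin.val h)⟩
    have := hS v' hv'
    omega
  rcases sparseNat n T hbd hsp with h | h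
  · omega
  · have := h.1; omega

lemma upper (j : ℕ) (hj : 3 ≤ j) (G : SimpleGraph (Fin (j * j))) :
    ∃ S : Set (Fin (j * j)),
      (kDense G 1 S ∧ S.ncard = 4) ∨ (kSparse G 1 S ∧ S.ncard = j) := by
  classical
  by_cases hd : ∃ S : Set (Fin (j * j)), kDense G 1 S ∧ S.ncard = 4
  · obtain ⟨S, h⟩ := hd; exact ⟨S, Or.inl h⟩
  push_neg at hd
  have claim1 : ∀ v u x y : Fin (j * j), G.Adj v u → G.Adj v x → G.Adj v y →
      G.Adj u x → G.Adj u y → x ≠ y → False := by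
    intro v u x y hvu hvx hvy hux huy hxy
    have hvu' := hvu.ne
    have hvx' := hvx.ne
    have hvy' := hvy.ne
    have hux' := hux.ne
    have huy' := huy.ne
    apply hd {v, u, x, y} ?_ |>.elim
    case _ =>
      -- cardinality 4
      rw [Set.ncard_insert_of_notMem (by simp [hvu', hvx', hvy']) (Set.toFinite _),
        Set.ncard_insert_of_notMem (by simp [hux', huy']) (Set.toFinite _),
        Set.ncard_insert_of_notMem (by simp [hxy]) (Set.toFinite _),
        Set.ncard_singleton]
    case _ =>
      -- kDense
      intro w hw
      simp only [Set.mem_insert_iff, Set.mem_singleton_iff] at hw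
      rcases hw with rfl | rfl | rfl | rfl
      · have : {z | z ∈ ({w, u, x, y} : Set (Fin (j*j))) ∧ z ≠ w ∧ ¬ G.Adj w z} ⊆ {y} := by
          rintro z ⟨hz, hzw, hznadj⟩
          simp only [Set.mem_insert_iff, Set.mem_singleton_iff] at hz
          rcases hz with rfl | rfl | rfl | rfl
          · exact absurd rfl hzw
          · exact absurd hvu hznadj
          · exact absurd hvx hznadj
          · exact absurd hvy hznadj
        calc _ ≤ ({y} : Set (Fin (j*j))).ncard := Set.ncard_le_ncard this (Set.toFinite _)
        _ = 1 := Set.ncard_singleton y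
      · have : {z | z ∈ ({v, w, x, y} : Set (Fin (j*j))) ∧ z ≠ w ∧ ¬ G.Adj w z} ⊆ {y} := by
          rintro z ⟨hz, hzw, hznadj⟩
          simp only [Set.mem_insert_iff, Set.mem_singleton_iff] at hz
          rcases hz with rfl | rfl | rfl | rfl
          · exact absurd hvu.symm hznadj
          · exact absurd rfl hzw
          · exact absurd hux hznadj
          · exact absurd huy hznadj
        calc _ ≤ ({y} : Set (Fin (j*j))).ncard := Set.ncard_le_ncard this (Set.toFinite _)
        _ = 1 := Set.ncard_singleton y
      · have : {z | z ∈ ({v, u, w, y} : Set (Fin (j*j))) ∧ z ≠ w ∧ ¬ G.Adj w z} ⊆ {y} := by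
          rintro z ⟨hz, hzw, hznadj⟩
          simp only [Set.mem_insert_iff, Set.mem_singleton_iff] at hz
          rcases hz with rfl | rfl | rfl | rfl
          · exact absurd hvx.symm hznadj
          · exact absurd hux.symm hznadj
          · exact absurd rfl hzw
          · exact Set.mem_singleton z
        calc _ ≤ ({y} : Set (Fin (j*j))).ncard := Set.ncard_le_ncard this (Set.toFinite _)
        _ = 1 := Set.ncard_singleton y
      · have : {z | z ∈ ({v, u, x, w} : Set (Fin (j*j))) ∧ z ≠ w ∧ ¬ G.Adj w z} ⊆ {x} := by
          rintro z ⟨hz, hzw, hznadj⟩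
          simp only [Set.mem_insert_iff, Set.mem_singleton_iff] at hz
          rcases hz with rfl | rfl | rfl | rfl
          · exact absurd hvy.symm hznadj
          · exact absurd huy.symm hznadj
          · exact Set.mem_singleton z
          · exact absurd rfl hzw
        calc _ ≤ ({x} : Set (Fin (j*j))).ncard := Set.ncard_le_ncard this (Set.toFinite _)
        _ = 1 := Set.ncard_singleton x
  set d : Fin (j * j) → Finset (Fin (j * j)) := fun v => Finset.univ.filter (G.Adj v) with hdd
  by_cases hbig : ∃ v, j ≤ (d v).card
  · obtain ⟨v, hv⟩ := hbig
    obtain ⟨t, hts, htc⟩ := Finset.exists_subset_card_eq hv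
    refine ⟨↑t, Or.inr ⟨?_, by rw [Set.ncard_coe_finset, htc]⟩⟩
    intro w hw
    have hwv : G.Adj v w := by
      have := hts hw
      rw [hdd] at this
      simpa using (Finset.mem_filter.mp this).2
    have hsub : {u | u ∈ (↑t : Set (Fin (j*j))) ∧ G.Adj w u}.Subsingleton := by
      rintro a ⟨haT, haA⟩ b ⟨hbT, hbA⟩
      by_contra hab
      have hva : G.Adj v a := by
        have := hts haT
        simpa [hdd] using (Finset.mem_filter.mp this).2
      have hvb : G.Adj v b := by
        have := hts hbT
        simpa [hdd] using (Finset.mem_filter.mp this).2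
      exact claim1 v w a b hwv hva hvb haA hbA hab
    have goal : {u | u ∈ (↑t : Set (Fin (j*j))) ∧ G.Adj w u}.ncard ≤ 1 := by
      rcases hsub.eq_empty_or_singleton with h | ⟨a, h⟩ <;> rw [h] <;> simp
    exact goal
  · push_neg at hbig
    have greedy : ∀ m : ℕ, ∀ s : Finset (Fin (j * j)), m * j ≤ s.card →
        ∃ t : Finset (Fin (j * j)), t ⊆ s ∧ t.card = m ∧
          ∀ x ∈ t, ∀ y ∈ t, x ≠ y → ¬ G.Adj x y := by
      intro m
      induction m with
      | zero => exact fun s _ => ⟨∅, by simp⟩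
      | succ m ih =>
        intro s hs
        have hne : s.Nonempty := by
          rw [← Finset.card_pos]
          have : j ≤ (m + 1) * j := Nat.le_mul_of_pos_left j (by omega)
          omega
        obtain ⟨v, hv⟩ := hne
        set s' := s \ insert v (d v) with hs'
        have hcard' : m * j ≤ s'.card := by
          have hc1 : (insert v (d v)).card ≤ j := by
            have := Finset.card_insert_le v (d v)
            have := hbig v
            omega
          have hc2 := Finset.le_card_sdiff (insert v (d v)) s
          rw [← hs'] at hc2
          have hmul : (m + 1) * j = m * j + j := by ring
          omega
        obtain ⟨t, hts, htc, hind⟩ := ih s' hcard'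
        have hvt : v ∉ t := by
          intro hvt
          have := hts hvt
          rw [hs', Finset.mem_sdiff] at this
          exact this.2 (Finset.mem_insert_self v _)
        have hnadj : ∀ z ∈ t, ¬ G.Adj v z := by
          intro z hz hadj
          have := hts hz
          rw [hs', Finset.mem_sdiff] at this
          apply this.2
          apply Finset.mem_insert_of_mem
          rw [hdd]
          simp [hadj]
        refine ⟨insert v t, ?_, ?_, ?_⟩
        · intro z hz
          rcases Finset.mem_insert.mp hz with rfl | hz
          · exact hv
          · exact (Finset.sdiff_subset) (hts hz)
        · rw [Finset.card_insert_of_notMem hvt, htc]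
        · intro x hx y hy hxy
          rcases Finset.mem_insert.mp hx with hxv | hxt
          · rcases Finset.mem_insert.mp hy with hyv | hyt
            · exact absurd (hxv.trans hyv.symm) hxy
            · intro h; rw [hxv] at h; exact hnadj y hyt h
          · rcases Finset.mem_insert.mp hy with hyv | hyt
            · intro h; rw [hyv] at h; exact hnadj x hxt h.symm
            · exact hind x hxt y hyt hxy
    obtain ⟨t, -, htc, hind⟩ := greedy j Finset.univ (by simp)
    refine ⟨↑t, Or.inr ⟨?_, by rw [Set.ncard_coe_finset, htc]⟩⟩
    intro w hw
    have : {u | u ∈ (↑t : Set (Fin (j*j))) ∧ G.Adj w u} = ∅ := by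
      ext z
      simp only [Set.mem_setOf_eq, Set.mem_empty_iff_false, iff_false, not_and]
      intro hzt hadj
      exact hind w hw z hzt hadj.ne hadj
    have goal : {u | u ∈ (↑t : Set (Fin (j*j))) ∧ G.Adj w u}.ncard ≤ 1 := by
      rw [this]; simp
    exact goal

/-- For every `j ≥ 3` there is a chordal graph on `2j - 3` vertices with no 1-dense
4-set and no 1-sparse `j`-set; consequently the defective Ramsey number
`R_1^{CH}(4, j)` is at least `2j - 2`. -/
theorem stmt19 (j : ℕ) (hj : 3 ≤ j) :
    (∃ G : SimpleGraph (Fin (2 * j - 3)), IsChordal G ∧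
      (¬ ∃ S : Set (Fin (2 * j - 3)), kDense G 1 S ∧ S.ncard = 4) ∧
      (¬ ∃ S : Set (Fin (2 * j - 3)), kSparse G 1 S ∧ S.ncard = j)) ∧
    2 * j - 2 ≤ sInf {n : ℕ | ∀ G : SimpleGraph (Fin n), IsChordal G →
      ∃ S : Set (Fin n), (kDense G 1 S ∧ S.ncard = 4) ∨ (kSparse G 1 S ∧ S.ncard = j)} := by
  constructor
  · exact ⟨cgraph _, cgraph_chordal _, cgraph_no_dense _,
      cgraph_no_sparse _ j hj (le_refl _)⟩
  · apply le_csInf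
    · exact ⟨j * j, fun G _ => upper j hj G⟩
    · intro n hn
      by_contra hlt
      push_neg at hlt
      obtain ⟨S, hS⟩ := hn (cgraph n) (cgraph_chordal n)
      rcases hS with ⟨hd, hc⟩ | ⟨hs, hc⟩
      · exact cgraph_no_dense n ⟨S, hd, hc⟩
      · exact cgraph_no_sparse n j hj (by omega) ⟨S, hs, hc⟩
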